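/- The double integral ∫₀¹∫₀¹ 6a(1-a)(a(3-b)+b)/(1+a(2-b)+b) db da equals 27·ln 3 − 28·ln 2 − 19/2. -/

import Mathlib

theorem stit_muVT_EP11 :
    (∫ a in (0:ℝ)..1, ∫ b in (0:ℝ)..1,
        6 * a * (1 - a) * (a * (3 - b) + b) / (1 + a * (2 - b) + b))
      = 27 * Real.log 3 - 28 * Real.log 2 - 19/2 := by
  have key : Set.EqOn
      (fun a : ℝ => ∫ b in (0:ℝ)..1, 6 * a * (1 - a) * (a * (3 - b) + b) / (1 + a * (2 - b) + b))
      (fun a : ℝ => 6*a*(1-a) - 6*a*(1-a)*Real.log (2+a) + 6*a*(1-a)*Real.log (1+2*a))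
      (Set.uIcc (0:ℝ) 1) := by
    intro a ha
    rw [Set.uIcc_of_le (by norm_num : (0:ℝ) ≤ 1)] at ha
    obtain ⟨ha0, ha1⟩ := ha
    have hpos : ∀ x ∈ Set.uIcc (0:ℝ) 1, 0 < 1 + a*(2-x) + x := by
      intro x hx
      rw [Set.uIcc_of_le (by norm_num : (0:ℝ) ≤ 1)] at hx
      nlinarith [hx.1, hx.2]
    have hderiv : ∀ x ∈ Set.uIcc (0:ℝ) 1,
        HasDerivAt (fun b => 6*a*(1-a)*b - 6*a*(1-a)*Real.log (1+2*a+b*(1-a)))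
          (6 * a * (1 - a) * (a * (3 - x) + x) / (1 + a * (2 - x) + x)) x := by
      intro x hx
      have hD : (0:ℝ) < 1+2*a+x*(1-a) := by
        have := hpos x hx; nlinarith
      have h1 : HasDerivAt (fun b : ℝ => 1+2*a+b*(1-a)) (1-a) x := by
        simpa using ((hasDerivAt_id x).mul_const (1-a)).const_add (1+2*a)
      have h2 := (h1.log hD.ne').const_mul (6*a*(1-a))
      have h3 := ((hasDerivAt_id x).const_mul (6*a*(1-a))).sub h2
      refine h3.congr_deriv ?_
      have hD2 := (hpos x hx).ne'
      rw [show (1:ℝ)+2*a+x*(1-a) = 1 + a*(2-x) + x by ring]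
      field_simp
      ring
    have hint : IntervalIntegrable
        (fun b : ℝ => 6 * a * (1 - a) * (a * (3 - b) + b) / (1 + a * (2 - b) + b))
        MeasureTheory.volume 0 1 := by
      apply ContinuousOn.intervalIntegrable
      apply ContinuousOn.div
      · fun_prop
      · fun_prop
      · intro x hx; exact (hpos x hx).ne'
    simp only
    rw [intervalIntegral.integral_eq_sub_of_hasDerivAt hderiv hint]
    have e1 : (1:ℝ)+2*a+1*(1-a) = 2+a := by ring
    have e2 : (1:ℝ)+2*a+0*(1-a) = 1+2*a := by ring
    simp only [e1, e2]
    ring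
  rw [intervalIntegral.integral_congr key]
  have houter : ∀ x ∈ Set.uIcc (0:ℝ) 1,
      HasDerivAt (fun a : ℝ =>
          (3*a^2-2*a^3)
          - ((3*a^2-2*a^3)*Real.log (2+a) + (2/3*a^3 - 7/2*a^2 + 14*a - 28*Real.log (2+a)))
          + ((3*a^2-2*a^3)*Real.log (1+2*a) + (2/3*a^3 - 2*a^2 + 2*a - Real.log (1+2*a))))
        (6*x*(1-x) - 6*x*(1-x)*Real.log (2+x) + 6*x*(1-x)*Real.log (1+2*x)) x := by
    intro x hx
    rw [Set.uIcc_of_le (by norm_num : (0:ℝ) ≤ 1)] at hx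
    obtain ⟨hx0, hx1⟩ := hx
    have h2x : (0:ℝ) < 2 + x := by linarith
    have h12x : (0:ℝ) < 1 + 2*x := by linarith
    have hp : HasDerivAt (fun a : ℝ => 3*a^2-2*a^3) (6*x-6*x^2) x := by
      have := ((hasDerivAt_pow 2 x).const_mul (3:ℝ)).sub ((hasDerivAt_pow 3 x).const_mul (2:ℝ))
      refine this.congr_deriv ?_
      push_cast; ring
    have hl1 : HasDerivAt (fun a : ℝ => Real.log (2+a)) (1/(2+x)) x := by
      have h := (((hasDerivAt_id x).const_add (2:ℝ)).log h2x.ne')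
      simpa using h
    have hl2 : HasDerivAt (fun a : ℝ => Real.log (1+2*a)) (2/(1+2*x)) x := by
      have hlin : HasDerivAt (fun a : ℝ => 1+2*a) (2:ℝ) x := by
        simpa using ((hasDerivAt_id x).const_mul (2:ℝ)).const_add (1:ℝ)
      simpa using hlin.log h12x.ne'
    have hq1 : HasDerivAt (fun a : ℝ => 2/3*a^3 - 7/2*a^2 + 14*a - 28*Real.log (2+a))
        (2*x^2 - 7*x + 14 - 28*(1/(2+x))) x := by
      have := ((((hasDerivAt_pow 3 x).const_mul (2/3:ℝ)).sub
        ((hasDerivAt_pow 2 x).const_mul (7/2:ℝ))).add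
        ((hasDerivAt_id x).const_mul (14:ℝ))).sub (hl1.const_mul (28:ℝ))
      refine this.congr_deriv ?_
      push_cast; ring
    have hq2 : HasDerivAt (fun a : ℝ => 2/3*a^3 - 2*a^2 + 2*a - Real.log (1+2*a))
        (2*x^2 - 4*x + 2 - 2/(1+2*x)) x := by
      have := ((((hasDerivAt_pow 3 x).const_mul (2/3:ℝ)).sub
        ((hasDerivAt_pow 2 x).const_mul (2:ℝ))).add
        ((hasDerivAt_id x).const_mul (2:ℝ))).sub hl2
      refine this.congr_deriv ?_
      push_cast; ring
    have big := (hp.sub ((hp.mul hl1).add hq1)).add ((hp.mul hl2).add hq2)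
    refine big.congr_deriv ?_
    field_simp
    ring
  have hgint : IntervalIntegrable
      (fun a : ℝ => 6*a*(1-a) - 6*a*(1-a)*Real.log (2+a) + 6*a*(1-a)*Real.log (1+2*a))
      MeasureTheory.volume 0 1 := by
    apply ContinuousOn.intervalIntegrable
    have hc1 : ContinuousOn (fun a : ℝ => Real.log (2+a)) (Set.uIcc (0:ℝ) 1) := by
      apply ContinuousOn.log (by fun_prop)
      intro x hx
      rw [Set.uIcc_of_le (by norm_num : (0:ℝ) ≤ 1)] at hx
      nlinarith [hx.1]
    have hc2 : ContinuousOn (fun a : ℝ => Real.log (1+2*a)) (Set.uIcc (0:ℝ) 1) := by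
      apply ContinuousOn.log (by fun_prop)
      intro x hx
      rw [Set.uIcc_of_le (by norm_num : (0:ℝ) ≤ 1)] at hx
      nlinarith [hx.1]
    exact ((by fun_prop : ContinuousOn (fun a : ℝ => 6*a*(1-a)) _).sub
      ((by fun_prop : ContinuousOn (fun a : ℝ => 6*a*(1-a)) _).mul hc1)).add
      ((by fun_prop : ContinuousOn (fun a : ℝ => 6*a*(1-a)) _).mul hc2)
  rw [intervalIntegral.integral_eq_sub_of_hasDerivAt houter hgint]
  norm_num [Real.log_one, show (2:ℝ)+1 = 3 by norm_num, show (1:ℝ)+2*1 = 3 by norm_num]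
  ring
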